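/- arXiv:2501.13482 — 5 statements merged into one kernel-verified Lean document; each statement's English description precedes it below -/
import Mathlib

section
/- For any two unit vectors |a⟩, |b⟩ in a Hilbert space and any operator O with 0 ≤ O ≤ 1, the quantity Tr[O|b⟩⟨b|] satisfies G₋(Tr[O|a⟩⟨a|], |⟨a|b⟩|²) ≤ Tr[O|b⟩⟨b|] ≤ G₊(Tr[O|a⟩⟨a|], |⟨a|b⟩|²), where g±(x,y) = x + (1−2x)(1−y) ± 2√(x(1−x)y(1−y)), G₋(x,y) = g₋(x,y) if x > 1−y and 0 otherwise, and G₊(x,y) = 1 if x ≥ y and g₊(x,y) otherwise. -/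
open scoped InnerProductSpace
open ContinuousLinearMap


lemma cs_pos {H : Type*} [NormedAddCommGroup H] [InnerProductSpace ℂ H] [CompleteSpace H]
    (T : H →L[ℂ] H) (hT : T.IsPositive) (u v : H) :
    ‖(⟪u, T v⟫_ℂ)‖^2 ≤ (⟪u, T u⟫_ℂ).re * (⟪v, T v⟫_ℂ).re := by
  have hsa : ∀ p q : H, ⟪T p, q⟫_ℂ = ⟪p, T q⟫_ℂ := fun p q => by
    rw [← hT.isSelfAdjoint.adjoint_eq, ContinuousLinearMap.adjoint_inner_left, hT.isSelfAdjoint.adjoint_eq]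
  set c : ℂ := ⟪u, T v⟫_ℂ with hc
  by_cases h0 : c = 0
  · rw [h0]
    simpa using mul_nonneg (hT.re_inner_nonneg_right u) (hT.re_inner_nonneg_right v)
  · have hvu : ⟪v, T u⟫_ℂ = (starRingEnd ℂ) c := by
      rw [← inner_conj_symm, hsa, ← hc]
    have key : ∀ l : ℝ, 0 ≤ (‖c‖^2 * (⟪u, T u⟫_ℂ).re) * (l*l) + (2*‖c‖^2) * l + (⟪v, T v⟫_ℂ).re := by
      intro l
      have h := hT.re_inner_nonneg_right ((l : ℂ) • (c • u) + v)
      have e1 : ⟪(l:ℂ) • (c • u) + v, T ((l:ℂ) • (c • u) + v)⟫_ℂ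
          = ((l*l*‖c‖^2 : ℝ) : ℂ) * ⟪u, T u⟫_ℂ + ((2*l*‖c‖^2 : ℝ) : ℂ) + ⟪v, T v⟫_ℂ := by
        have hcc : (starRingEnd ℂ) c * c = ((‖c‖^2 : ℝ) : ℂ) := by
          rw [RCLike.conj_mul]; norm_cast
        simp only [map_add, map_smul, inner_add_left, inner_add_right, inner_smul_left,
          inner_smul_right, hvu, ← hc, Complex.conj_ofReal]
        push_cast at hcc ⊢
        linear_combination ((l:ℂ)*l*⟪u, T u⟫_ℂ + 2*l) * hcc
      rw [e1] at h
      simp only [RCLike.re_to_complex, Complex.add_re, Complex.ofReal_re, Complex.re_ofReal_mul] at h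
      linarith
    have hd := discrim_le_zero key
    rw [discrim] at hd
    have hc2 : (0:ℝ) < ‖c‖^2 := pow_pos (norm_pos_iff.mpr h0) 2
    nlinarith [hd, hc2]


noncomputable def gPlus (x y : ℝ) : ℝ := x + (1 - 2*x)*(1 - y) + 2*Real.sqrt (x*(1 - x)*y*(1 - y))
noncomputable def gMinus (x y : ℝ) : ℝ := x + (1 - 2*x)*(1 - y) - 2*Real.sqrt (x*(1 - x)*y*(1 - y))
noncomputable def GMinus (x y : ℝ) : ℝ := if x > 1 - y then gMinus x y else 0
noncomputable def GPlus (x y : ℝ) : ℝ := if x ≥ y then 1 else gPlus x y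

lemma sq_le_imp {a b : ℝ} (ha : 0 ≤ a) (hb : 0 ≤ b) (h : a^2 ≤ b^2) : a ≤ b := by nlinarith

lemma low1 (sx sy sx' sy' st m z : ℝ) (hsy : 0 ≤ sy)
    (h1 : st ≤ sx'*sy') (h2 : sx'*sy' ≤ sx*sy) (hm : m ≤ sx*st)
    (hz : sx^2*sy^2 + st^2 - 2*sy*m ≤ z) :
    sx^2*sy^2 + sx'^2*sy'^2 - 2*(sx*sx'*sy*sy') ≤ z := by
  nlinarith [mul_le_mul_of_nonneg_left hm hsy,
    mul_nonneg (sub_nonneg.2 h1) (by linarith : (0:ℝ) ≤ 2*(sx*sy) - sx'*sy' - st)]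

lemma low2 (sx sy sx' sy' ss m z : ℝ) (hsy : 0 ≤ sy) (hss : 0 ≤ ss) (hsx' : 0 ≤ sx')
    (hsx : 0 ≤ sx) (hsy' : 0 ≤ sy')
    (h1 : ss ≤ sx*sy') (hm : m ≤ sx'*ss)
    (hprod : sx'^2*sy'^2 = sy'^2 - sx^2*sy'^2)
    (hz : sx^2*sy^2 + (sy'^2 - ss^2) - 2*sy*m ≤ z) :
    sx^2*sy^2 + sx'^2*sy'^2 - 2*(sx*sx'*sy*sy') ≤ z := by
  nlinarith [mul_le_mul_of_nonneg_left hm hsy,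
    mul_nonneg (sub_nonneg.2 h1) (by positivity : (0:ℝ) ≤ sx*sy' + ss + 2*(sx'*sy))]

lemma up1 (sx sy sx' sy' st m z : ℝ) (hsy : 0 ≤ sy) (hsx : 0 ≤ sx) (hsx' : 0 ≤ sx')
    (hsy' : 0 ≤ sy') (hst : 0 ≤ st)
    (h1 : st ≤ sx'*sy') (hm : m ≤ sx*st)
    (hz : z ≤ sx^2*sy^2 + st^2 + 2*sy*m) :
    z ≤ sx^2*sy^2 + sx'^2*sy'^2 + 2*(sx*sx'*sy*sy') := by
  nlinarith [mul_le_mul_of_nonneg_left hm hsy,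
    mul_nonneg (sub_nonneg.2 h1) (by positivity : (0:ℝ) ≤ sx'*sy' + st + 2*(sx*sy))]

lemma up2 (sx sy sx' sy' ss m z : ℝ) (hsy : 0 ≤ sy) (hss : 0 ≤ ss)
    (h1 : ss ≤ sx*sy') (h2 : sx*sy' ≤ sx'*sy) (hm : m ≤ sx'*ss)
    (hprod : sx'^2*sy'^2 = sy'^2 - sx^2*sy'^2)
    (hz : z ≤ sx^2*sy^2 + (sy'^2 - ss^2) + 2*sy*m) :
    z ≤ sx^2*sy^2 + sx'^2*sy'^2 + 2*(sx*sx'*sy*sy') := by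
  nlinarith [mul_le_mul_of_nonneg_left hm hsy,
    mul_nonneg (sub_nonneg.2 h1) (by linarith : (0:ℝ) ≤ 2*(sx'*sy) - sx*sy' - ss)]

set_option maxHeartbeats 1000000 in
lemma key_real (x y t m z : ℝ) (hx0 : 0 ≤ x) (hx1 : x ≤ 1) (hy0 : 0 ≤ y) (hy1 : y ≤ 1)
    (ht0 : 0 ≤ t) (ht1 : t ≤ 1 - y) (hm : 0 ≤ m) (hm1 : m^2 ≤ x*t)
    (hm2 : m^2 ≤ (1-x)*(1-y-t)) (hz0 : 0 ≤ z) (hz1 : z ≤ 1)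
    (hzl : x*y + t - 2*Real.sqrt y * m ≤ z) (hzu : z ≤ x*y + t + 2*Real.sqrt y * m) :
    GMinus x y ≤ z ∧ z ≤ GPlus x y := by
  set sx := Real.sqrt x with hsxd
  set sx' := Real.sqrt (1-x) with hsx'd
  set sy := Real.sqrt y with hsyd
  set sy' := Real.sqrt (1-y) with hsy'd
  have hsx : sx^2 = x := Real.sq_sqrt hx0
  have hsx' : sx'^2 = 1-x := Real.sq_sqrt (by linarith)
  have hsy : sy^2 = y := Real.sq_sqrt hy0
  have hsy' : sy'^2 = 1-y := Real.sq_sqrt (by linarith)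
  have hsxn : 0 ≤ sx := Real.sqrt_nonneg _
  have hsx'n : 0 ≤ sx' := Real.sqrt_nonneg _
  have hsyn : 0 ≤ sy := Real.sqrt_nonneg _
  have hsy'n : 0 ≤ sy' := Real.sqrt_nonneg _
  have hR : Real.sqrt (x*(1 - x)*y*(1 - y)) = sx*sx'*sy*sy' := by
    rw [show x*(1-x)*y*(1-y) = (sx*sx'*sy*sy')^2 by
      rw [mul_pow, mul_pow, mul_pow, hsx, hsx', hsy, hsy']]
    exact Real.sqrt_sq (by positivity)
  have h1yt : 0 ≤ 1 - y - t := by linarith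
  set st := Real.sqrt t with hstd
  set ss := Real.sqrt (1-y-t) with hssd
  have hst : st^2 = t := Real.sq_sqrt ht0
  have hss : ss^2 = 1-y-t := Real.sq_sqrt h1yt
  have hstn : 0 ≤ st := Real.sqrt_nonneg _
  have hssn : 0 ≤ ss := Real.sqrt_nonneg _
  have hm1' : m ≤ sx * st := sq_le_imp hm (by positivity) (by rw [mul_pow, hsx, hst]; exact hm1)
  have hm2' : m ≤ sx' * ss := sq_le_imp hm (by positivity) (by rw [mul_pow, hsx', hss]; exact hm2)
  have egoal : x + (1-2*x)*(1-y) = sx^2*sy^2 + sx'^2*sy'^2 := by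
    rw [hsx, hsy, hsx', hsy']; ring
  have hprod : sx'^2*sy'^2 = sy'^2 - sx^2*sy'^2 := by rw [hsx, hsx', hsy']; ring
  have htss : t = sy'^2 - ss^2 := by rw [hsy', hss]; ring
  constructor
  · rw [GMinus]
    split_ifs with hcond
    · rw [gMinus, hR, egoal]
      rcases le_or_gt t ((1-x)*(1-y)) with hcase | hcase
      · have h1 : st ≤ sx' * sy' := sq_le_imp hstn (by positivity)
          (by rw [mul_pow, hsx', hsy', hst]; exact hcase)
        have h2 : sx' * sy' ≤ sx * sy := sq_le_imp (by positivity) (by positivity)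
          (by rw [mul_pow, mul_pow, hsx, hsx', hsy, hsy']; nlinarith)
        exact low1 sx sy sx' sy' st m z hsyn h1 h2 hm1'
          (by rw [hsx, hsy, hst]; exact hzl)
      · have h1 : ss ≤ sx * sy' := sq_le_imp hssn (by positivity)
          (by rw [mul_pow, hsx, hsy', hss]; nlinarith)
        exact low2 sx sy sx' sy' ss m z hsyn hssn hsx'n hsxn hsy'n h1 hm2' hprod
          (by rw [hsx, hsy, ← htss]; exact hzl)
    · linarith
  · rw [GPlus]
    split_ifs with hcond
    · exact hz1
    · push_neg at hcond
      rw [gPlus, hR, egoal]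
      rcases le_or_gt t ((1-x)*(1-y)) with hcase | hcase
      · have h1 : st ≤ sx' * sy' := sq_le_imp hstn (by positivity)
          (by rw [mul_pow, hsx', hsy', hst]; exact hcase)
        exact up1 sx sy sx' sy' st m z hsyn hsxn hsx'n hsy'n hstn h1 hm1'
          (by rw [hsx, hsy, hst]; exact hzu)
      · have h1 : ss ≤ sx * sy' := sq_le_imp hssn (by positivity)
          (by rw [mul_pow, hsx, hsy', hss]; nlinarith)
        have h2 : sx * sy' ≤ sx' * sy := sq_le_imp (by positivity) (by positivity)
          (by rw [mul_pow, mul_pow, hsx, hsx', hsy, hsy']; nlinarith)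
        exact up2 sx sy sx' sy' ss m z hsyn hssn h1 h2 hm2' hprod
          (by rw [hsx, hsy, ← htss]; exact hzu)


set_option maxHeartbeats 1000000 in
/-- Cauchy–Schwarz constraint on the statistics of two pure states under one POVM element. -/
theorem stmt0 {H : Type*} [NormedAddCommGroup H] [InnerProductSpace ℂ H] [CompleteSpace H]
    (a b : H) (ha : ‖a‖ = 1) (hb : ‖b‖ = 1) (O : H →L[ℂ] H)
    (hO : O.IsPositive) (hO1 : (1 - O).IsPositive) :
    GMinus (⟪a, O a⟫_ℂ).re (‖⟪a, b⟫_ℂ‖^2) ≤ (⟪b, O b⟫_ℂ).re ∧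
    (⟪b, O b⟫_ℂ).re ≤ GPlus (⟪a, O a⟫_ℂ).re (‖⟪a, b⟫_ℂ‖^2) := by
  have hsa : ∀ p q : H, ⟪O p, q⟫_ℂ = ⟪p, O q⟫_ℂ := fun p q => by
    rw [← hO.isSelfAdjoint.adjoint_eq, ContinuousLinearMap.adjoint_inner_left, hO.isSelfAdjoint.adjoint_eq]
  set α : ℂ := ⟪a, b⟫_ℂ with hα
  set w : H := b - α • a with hw
  set x : ℝ := (⟪a, O a⟫_ℂ).re with hxd
  set z : ℝ := (⟪b, O b⟫_ℂ).re with hzd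
  set y : ℝ := ‖α‖^2 with hyd
  set u : ℂ := ⟪a, O w⟫_ℂ with hu
  set t : ℝ := (⟪w, O w⟫_ℂ).re with htd
  set m : ℝ := ‖u‖ with hmd
  have haa : ⟪a, a⟫_ℂ = 1 := by
    rw [inner_self_eq_norm_sq_to_K, ha]; norm_num
  have hbb : ⟪b, b⟫_ℂ = 1 := by
    rw [inner_self_eq_norm_sq_to_K, hb]; norm_num
  have haw : ⟪a, w⟫_ℂ = 0 := by
    rw [hw, inner_sub_right, inner_smul_right, haa, ← hα]; ring
  have hba : ⟪b, a⟫_ℂ = (starRingEnd ℂ) α := by rw [← inner_conj_symm, ← hα]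
  have hαα : α * (starRingEnd ℂ) α = ((y : ℝ) : ℂ) := by
    rw [Complex.mul_conj']; norm_cast
  have hαα' : (starRingEnd ℂ) α * α = ((y : ℝ) : ℂ) := by rw [mul_comm] at hαα; exact hαα
  have hww : (⟪w, w⟫_ℂ).re = 1 - y := by
    have expand : ⟪w, w⟫_ℂ = 1 - α * (starRingEnd ℂ) α := by
      rw [hw, inner_sub_left, inner_sub_right, inner_sub_right, inner_smul_left,
        inner_smul_right, inner_smul_left, inner_smul_right, haa, hbb, ← hα, hba]
      ring
    rw [expand, hαα]
    simp
  have hbexp : b = α • a + w := by rw [hw]; abel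
  have hwOa : ⟪w, O a⟫_ℂ = (starRingEnd ℂ) u := by rw [← inner_conj_symm, hsa, ← hu]
  have hzexp : z = y * x + 2*((starRingEnd ℂ) α * u).re + t := by
    rw [hzd]
    conv_lhs => rw [hbexp]
    simp only [map_add, map_smul, inner_add_left, inner_add_right, inner_smul_left,
      inner_smul_right, hwOa, ← hu]
    have e2 : α * (starRingEnd ℂ) u = (starRingEnd ℂ) ((starRingEnd ℂ) α * u) := by
      rw [map_mul, Complex.conj_conj]
    rw [mul_add, ← mul_assoc, hαα, e2]
    simp only [Complex.add_re, Complex.conj_re, Complex.re_ofReal_mul]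
    rw [← hxd, ← htd]; ring
  have hcross : |((starRingEnd ℂ) α * u).re| ≤ Real.sqrt y * m := by
    have h1 : |((starRingEnd ℂ) α * u).re| ≤ ‖(starRingEnd ℂ) α * u‖ :=
      Complex.abs_re_le_norm _
    have h2 : ‖(starRingEnd ℂ) α * u‖ = ‖α‖ * m := by
      rw [norm_mul, RCLike.norm_conj, hmd]
    have h3 : Real.sqrt y = ‖α‖ := by rw [hyd]; exact Real.sqrt_sq (norm_nonneg α)
    rw [h3]; linarith
  have cs1 : m^2 ≤ x * t := by
    have := cs_pos O hO a w
    rw [← hu, ← hxd, ← htd, ← hmd] at this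
    exact this
  have cs2 : m^2 ≤ (1 - x) * (1 - y - t) := by
    have h := cs_pos (1 - O) hO1 a w
    simp only [ContinuousLinearMap.sub_apply, ContinuousLinearMap.one_apply] at h
    rw [inner_sub_right a w (O w), inner_sub_right a a (O a), inner_sub_right w w (O w), haw, haa, ← hu] at h
    have e1 : ‖(0:ℂ) - u‖ = m := by rw [zero_sub, norm_neg, hmd]
    rw [e1] at h
    simp only [Complex.sub_re, Complex.one_re] at h
    rw [← hxd, hww, ← htd] at h
    convert h using 2
  have hx0 : 0 ≤ x := hO.re_inner_nonneg_right a
  have hx1 : x ≤ 1 := by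
    have h := hO1.re_inner_nonneg_right a
    simp only [ContinuousLinearMap.sub_apply, ContinuousLinearMap.one_apply] at h
    rw [inner_sub_right, haa] at h
    simp only [RCLike.re_to_complex, Complex.sub_re, Complex.one_re] at h
    rw [← hxd] at h; linarith
  have hz0 : 0 ≤ z := hO.re_inner_nonneg_right b
  have hz1 : z ≤ 1 := by
    have h := hO1.re_inner_nonneg_right b
    simp only [ContinuousLinearMap.sub_apply, ContinuousLinearMap.one_apply] at h
    rw [inner_sub_right, hbb] at h
    simp only [RCLike.re_to_complex, Complex.sub_re, Complex.one_re] at h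
    rw [← hzd] at h; linarith
  have ht0 : 0 ≤ t := hO.re_inner_nonneg_right w
  have ht1 : t ≤ 1 - y := by
    have h := hO1.re_inner_nonneg_right w
    simp only [ContinuousLinearMap.sub_apply, ContinuousLinearMap.one_apply] at h
    rw [inner_sub_right] at h
    simp only [RCLike.re_to_complex, Complex.sub_re] at h
    rw [hww, ← htd] at h; linarith
  have hy0 : 0 ≤ y := by positivity
  have hy1 : y ≤ 1 := by
    have h := norm_inner_le_norm (𝕜 := ℂ) a b
    rw [ha, hb, ← hα] at h
    rw [hyd]; nlinarith [norm_nonneg α]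
  have hm0 : 0 ≤ m := norm_nonneg u
  have hzl : x*y + t - 2*Real.sqrt y * m ≤ z := by
    rw [hzexp]
    have := abs_le.1 hcross
    linarith [this.1]
  have hzu : z ≤ x*y + t + 2*Real.sqrt y * m := by
    rw [hzexp]
    have := abs_le.1 hcross
    linarith [this.2]
  exact key_real x y t m z hx0 hx1 hy0 hy1 ht0 ht1 hm0 cs1 cs2 hz0 hz1 hzl hzu
end

section
/- For fixed y ∈ [0,1], the function x ↦ G₊(x,y) is concave on [0,1], where G₊(x,y) = 1 for x ≥ y and G₊(x,y) = x + (1−2x)(1−y) + 2√(x(1−x)y(1−y)) for x < y. -/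
/-- Concavity transfers along equality on the set. -/
lemma concaveOn_congr' {s : Set ℝ} {f g : ℝ → ℝ} (h : ConcaveOn ℝ s f)
    (he : ∀ x ∈ s, f x = g x) : ConcaveOn ℝ s g := by
  refine ⟨h.1, fun x hx z hz a b ha hb hab => ?_⟩
  rw [← he x hx, ← he z hz, ← he _ (h.1 hx hz ha hb hab)]
  exact h.2 hx hz ha hb hab

/-- Composition lemma with an explicit superset of the image. -/
lemma concaveOn_comp' {s t : Set ℝ} {f g : ℝ → ℝ} (hg : ConcaveOn ℝ t g)
    (hf : ConcaveOn ℝ s f) (hmono : MonotoneOn g t) (hsub : ∀ x ∈ s, f x ∈ t) :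
    ConcaveOn ℝ s (fun x => g (f x)) := by
  refine ⟨hf.1, fun x hx z hz a b ha hb hab => ?_⟩
  calc a • g (f x) + b • g (f z)
      ≤ g (a • f x + b • f z) := hg.2 (hsub x hx) (hsub z hz) ha hb hab
    _ ≤ g (f (a • x + b • z)) := hmono (hg.1 (hsub x hx) (hsub z hz) ha hb hab)
        (hsub _ (hf.1 hx hz ha hb hab)) (hf.2 hx hz ha hb hab)

lemma affine_concave (a b : ℝ) (s : Set ℝ) (hs : Convex ℝ s) :
    ConcaveOn ℝ s (fun x => a * x + b) := by
  refine ⟨hs, fun x hx z hz p q hp hq hpq => le_of_eq ?_⟩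
  simp only [smul_eq_mul]
  linear_combination b * hpq

lemma quad_concave : ConcaveOn ℝ (Set.Icc (0:ℝ) 1) (fun x : ℝ => x * (1 - x)) := by
  have h2 : ConvexOn ℝ Set.univ (fun x : ℝ => x ^ 2) := Even.convexOn_pow even_two
  have h3 : ConcaveOn ℝ Set.univ (fun x : ℝ => -(x ^ 2)) := h2.neg
  have h4 : ConcaveOn ℝ Set.univ (fun x : ℝ => x + -(x ^ 2)) :=
    (concaveOn_id convex_univ).add h3
  have h5 := h4.subset (Set.subset_univ _) (convex_Icc 0 1)
  exact concaveOn_congr' h5 (fun x _ => by ring)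

lemma sqrtquad_concave : ConcaveOn ℝ (Set.Icc (0:ℝ) 1) (fun x : ℝ => Real.sqrt (x * (1 - x))) := by
  refine concaveOn_comp' (t := Set.Ici 0) Real.strictConcaveOn_sqrt.concaveOn quad_concave
    (fun u _ v _ huv => Real.sqrt_le_sqrt huv) ?_
  rintro x ⟨hx0, hx1⟩
  have : (0:ℝ) ≤ x * (1 - x) := mul_nonneg hx0 (by linarith)
  exact this

lemma gPlus_concave (y : ℝ) (hy : y ∈ Set.Icc (0:ℝ) 1) :
    ConcaveOn ℝ (Set.Icc (0:ℝ) 1) (fun x => gPlus x y) := by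
  obtain ⟨hy0, hy1⟩ := hy
  have hc : (0:ℝ) ≤ 2 * Real.sqrt (y * (1 - y)) := by positivity
  have h1 : ConcaveOn ℝ (Set.Icc (0:ℝ) 1)
      (fun x => ((2*y - 1) * x + (1 - y)) +
        (2 * Real.sqrt (y * (1 - y))) • Real.sqrt (x * (1 - x))) :=
    (affine_concave _ _ _ (convex_Icc 0 1)).add (sqrtquad_concave.smul hc)
  refine concaveOn_congr' h1 ?_
  rintro x ⟨hx0, hx1⟩
  have hxx : (0:ℝ) ≤ x * (1 - x) := mul_nonneg hx0 (by linarith)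
  have hsq : Real.sqrt (x*(1 - x)*y*(1 - y)) =
      Real.sqrt (x * (1 - x)) * Real.sqrt (y * (1 - y)) := by
    rw [show x*(1 - x)*y*(1 - y) = (x*(1-x)) * (y*(1-y)) by ring, Real.sqrt_mul hxx]
  simp only [gPlus, hsq, smul_eq_mul]
  ring

lemma gPlus_le_one (x y : ℝ) (hx : x ∈ Set.Icc (0:ℝ) 1) (hy : y ∈ Set.Icc (0:ℝ) 1) :
    gPlus x y ≤ 1 := by
  obtain ⟨hx0, hx1⟩ := hx
  obtain ⟨hy0, hy1⟩ := hy
  set u := x * (1 - y) with hu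
  set v := y * (1 - x) with hv
  have hu0 : 0 ≤ u := mul_nonneg hx0 (by linarith)
  have hv0 : 0 ≤ v := mul_nonneg hy0 (by linarith)
  have heq : x*(1 - x)*y*(1 - y) = u * v := by rw [hu, hv]; ring
  have hs : Real.sqrt (x*(1 - x)*y*(1 - y)) = Real.sqrt u * Real.sqrt v := by
    rw [heq, Real.sqrt_mul hu0]
  have h1 : 2 * (Real.sqrt u * Real.sqrt v) ≤ u + v := by
    nlinarith [sq_nonneg (Real.sqrt u - Real.sqrt v), Real.sq_sqrt hu0, Real.sq_sqrt hv0]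
  simp only [gPlus, hs]
  nlinarith [h1]

lemma gPlus_self (y : ℝ) (hy : y ∈ Set.Icc (0:ℝ) 1) : gPlus y y = 1 := by
  obtain ⟨hy0, hy1⟩ := hy
  have h : y*(1 - y)*y*(1 - y) = (y * (1-y))^2 := by ring
  have hs : Real.sqrt (y*(1 - y)*y*(1 - y)) = y * (1 - y) := by
    rw [h, Real.sqrt_sq (mul_nonneg hy0 (by linarith))]
  simp only [gPlus, hs]
  ring

/-- A concave function on `[c,d]` attaining its max at `d` is monotone. -/
lemma monotoneOn_of_concave {c d : ℝ} {f : ℝ → ℝ} (hf : ConcaveOn ℝ (Set.Icc c d) f)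
    (hle : ∀ x ∈ Set.Icc c d, f x ≤ f d) : MonotoneOn f (Set.Icc c d) := by
  rintro a ha b hb hab
  rcases eq_or_lt_of_le hab with rfl | hab'
  · exact le_rfl
  have hcd : c ≤ d := le_trans ha.1 ha.2
  have hd : d ∈ Set.Icc c d := ⟨hcd, le_rfl⟩
  have had : a < d := lt_of_lt_of_le hab' hb.2
  set t := (d - b) / (d - a) with ht
  set s := (b - a) / (d - a) with hs
  have hda : (0:ℝ) < d - a := by linarith
  have ht0 : 0 ≤ t := div_nonneg (by linarith [hb.2]) hda.le
  have hs0 : 0 ≤ s := div_nonneg (by linarith) hda.le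
  have hts : t + s = 1 := by rw [ht, hs]; field_simp; ring
  have hne : d - a ≠ 0 := hda.ne'
  have hcomb : t • a + s • d = b := by
    rw [smul_eq_mul, smul_eq_mul, ht, hs]
    field_simp
    ring
  have h2 := hf.2 ha hd ht0 hs0 hts
  rw [hcomb] at h2
  have hfa : f a ≤ f d := hle a ha
  calc f a = t * f a + s * f a := by rw [← add_mul, hts]; ring
    _ ≤ t * f a + s * f d := by nlinarith
    _ ≤ f b := by simpa [smul_eq_mul] using h2

/-- For fixed `y ∈ [0,1]`, the map `x ↦ G₊(x,y)` is concave on `[0,1]`. -/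
theorem stmt1 (y : ℝ) (hy : y ∈ Set.Icc (0:ℝ) 1) :
    ConcaveOn ℝ (Set.Icc (0:ℝ) 1) (fun x => GPlus x y) := by
  obtain ⟨hy0, hy1⟩ := hy
  have hyI : y ∈ Set.Icc (0:ℝ) 1 := ⟨hy0, hy1⟩
  -- g concave on [0,y]
  have hsub : Set.Icc (0:ℝ) y ⊆ Set.Icc (0:ℝ) 1 := Set.Icc_subset_Icc le_rfl hy1
  have hg : ConcaveOn ℝ (Set.Icc (0:ℝ) y) (fun x => gPlus x y) :=
    (gPlus_concave y hyI).subset hsub (convex_Icc 0 y)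
  have hle : ∀ x ∈ Set.Icc (0:ℝ) y, gPlus x y ≤ gPlus y y := by
    intro x hx
    rw [gPlus_self y hyI]
    exact gPlus_le_one x y (hsub hx) hyI
  have hmono : MonotoneOn (fun x => gPlus x y) (Set.Icc (0:ℝ) y) :=
    monotoneOn_of_concave hg hle
  -- min is concave
  have hmin : ConcaveOn ℝ (Set.Icc (0:ℝ) 1) (fun x => min x y) := by
    refine ⟨convex_Icc 0 1, fun x hx z hz a b ha hb hab => ?_⟩
    simp only [smul_eq_mul, le_min_iff]
    constructor
    · nlinarith [min_le_left x y, min_le_left z y]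
    · nlinarith [min_le_right x y, min_le_right z y]
  have himg : ∀ x ∈ Set.Icc (0:ℝ) 1, min x y ∈ Set.Icc (0:ℝ) y := by
    rintro x ⟨hx0, hx1⟩
    exact ⟨le_min hx0 hy0, min_le_right x y⟩
  have hcomp : ConcaveOn ℝ (Set.Icc (0:ℝ) 1) (fun x => gPlus (min x y) y) :=
    concaveOn_comp' hg hmin hmono himg
  refine concaveOn_congr' hcomp ?_
  rintro x ⟨hx0, hx1⟩
  by_cases h : x ≥ y
  · rw [min_eq_right h, gPlus_self y hyI]
    simp [GPlus, h]
  · push_neg at h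
    rw [min_eq_left h.le]
    simp [GPlus, not_le.mpr h]
end

section
/- For fixed y ∈ [0,1] and any reference point c ∈ (0,1) with c < y, and any x ∈ [0,1], one has G₊(x,y) ≤ G₊(c,y) + g₊'(c,y)·(x − c), where g₊'(x,y) = −1 + 2y + (1−2x)√(y(1−y)/(x(1−x))). -/
noncomputable def gPlus' (x y : ℝ) : ℝ := -1 + 2*y + (1 - 2*x)*Real.sqrt (y*(1 - y)/(x*(1 - x)))

lemma tangent (y c x : ℝ) (hy : y ∈ Set.Icc (0:ℝ) 1) (hc : c ∈ Set.Ioo (0:ℝ) 1)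
    (hx : x ∈ Set.Icc (0:ℝ) 1) :
    gPlus x y ≤ gPlus c y + gPlus' c y * (x - c) := by
  obtain ⟨hy0, hy1⟩ := hy
  obtain ⟨hc0, hc1⟩ := hc
  obtain ⟨hx0, hx1⟩ := hx
  set sp := Real.sqrt (c*(1-c)) with hsp
  set sq := Real.sqrt (y*(1-y)) with hsq
  set sx := Real.sqrt (x*(1-x)) with hsx
  have hp : (0:ℝ) < c*(1-c) := by nlinarith
  have hsp0 : 0 < sp := Real.sqrt_pos.mpr hp
  have hsq0 : 0 ≤ sq := Real.sqrt_nonneg _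
  have hsx0 : 0 ≤ sx := Real.sqrt_nonneg _
  have hsp2 : sp^2 = c*(1-c) := Real.sq_sqrt hp.le
  have hsq2 : sq^2 = y*(1-y) := Real.sq_sqrt (by nlinarith)
  have hsx2 : sx^2 = x*(1-x) := Real.sq_sqrt (by nlinarith)
  have hdiv : Real.sqrt (y*(1-y)/(c*(1-c))) = sq/sp := by
    rw [Real.sqrt_div (by nlinarith)]
  have h1 : Real.sqrt (x*(1-x)*y*(1-y)) = sx*sq := by
    rw [hsx, hsq, ← Real.sqrt_mul (by nlinarith)]; ring_nf
  have h2 : Real.sqrt (c*(1-c)*y*(1-y)) = sp*sq := by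
    rw [hsp, hsq, ← Real.sqrt_mul (by nlinarith)]; ring_nf
  have key : 2*sp*sx ≤ c + x - 2*c*x := by
    nlinarith [sq_nonneg (sp*sx), sq_nonneg (c - x), sq_nonneg (2*sp*sx - (c+x-2*c*x)), sq_nonneg (c+x-2*c*x)]
  unfold gPlus gPlus'
  rw [hdiv, h1, h2]
  have e : c + (1-2*c)*(1-y) + 2*(sp*sq) + (-1+2*y + (1-2*c)*(sq/sp))*(x-c)
      - (x + (1-2*x)*(1-y) + 2*(sx*sq)) = sq/sp * ((c+x-2*c*x) - 2*sp*sx) := by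
    field_simp
    linear_combination 2*sq*hsp2
  have hnn : 0 ≤ sq/sp * ((c+x-2*c*x) - 2*sp*sx) :=
    mul_nonneg (div_nonneg hsq0 hsp0.le) (by linarith)
  linarith

lemma slope_nonneg (y c : ℝ) (hy : y ∈ Set.Icc (0:ℝ) 1) (hc : c ∈ Set.Ioo (0:ℝ) 1)
    (hcy : c < y) : 0 ≤ gPlus' c y := by
  obtain ⟨hy0, hy1⟩ := hy
  obtain ⟨hc0, hc1⟩ := hc
  set sp := Real.sqrt (c*(1-c)) with hsp
  set sq := Real.sqrt (y*(1-y)) with hsq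
  have hp : (0:ℝ) < c*(1-c) := by nlinarith
  have hsp0 : 0 < sp := Real.sqrt_pos.mpr hp
  have hsq0 : 0 ≤ sq := Real.sqrt_nonneg _
  have hsp2 : sp^2 = c*(1-c) := Real.sq_sqrt hp.le
  have hsq2 : sq^2 = y*(1-y) := Real.sq_sqrt (by nlinarith)
  have hdiv : Real.sqrt (y*(1-y)/(c*(1-c))) = sq/sp := by
    rw [Real.sqrt_div (by nlinarith)]
  unfold gPlus'
  rw [hdiv]
  rw [← sub_nonneg]
  have e : -1 + 2*y + (1-2*c)*(sq/sp) - 0 = ((2*y-1)*sp + (1-2*c)*sq)/sp := by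
    field_simp
    ring_nf
  rw [e]
  apply div_nonneg _ hsp0.le
  rcases le_or_gt y (1/2) with hy2 | hy2
  · -- c < y ≤ 1/2 : (1-2c)sq ≥ (1-2y)sp, both sides nonneg
    have hq : sp^2 ≤ sq^2 := by nlinarith
    nlinarith [mul_nonneg hsq0 hsp0.le, sq_nonneg (sq - sp), sq_nonneg (sq + sp),
      mul_nonneg (mul_nonneg hsq0 hsp0.le) hsq0]
  · rcases le_or_gt c (1/2) with hc2 | hc2
    · have h1 : 0 ≤ (2*y-1)*sp := by nlinarith
      have h2 : 0 ≤ (1-2*c)*sq := by nlinarith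
      linarith
    · have hq : sq^2 ≤ sp^2 := by nlinarith
      nlinarith [mul_nonneg hsq0 hsp0.le, sq_nonneg (sq - sp), sq_nonneg (sq + sp)]

lemma gPlus_diag (y : ℝ) (hy0 : 0 ≤ y) (hy1 : y ≤ 1) : gPlus y y = 1 := by
  unfold gPlus
  have : Real.sqrt (y*(1-y)*y*(1-y)) = y*(1-y) := by
    rw [show y*(1-y)*y*(1-y) = (y*(1-y))^2 by ring, Real.sqrt_sq (by nlinarith)]
  rw [this]; ring

/-- Linearized upper Cauchy–Schwarz constraint: tangent line at `c` dominates `G₊`. -/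
theorem stmt3 (y c x : ℝ) (hy : y ∈ Set.Icc (0:ℝ) 1) (hc : c ∈ Set.Ioo (0:ℝ) 1)
    (hcy : c < y) (hx : x ∈ Set.Icc (0:ℝ) 1) :
    GPlus x y ≤ GPlus c y + gPlus' c y * (x - c) := by
  have hGc : GPlus c y = gPlus c y := if_neg (not_le.mpr hcy)
  have hsl := slope_nonneg y c hy hc hcy
  rcases le_or_gt y x with hxy | hxy
  · have hGx : GPlus x y = 1 := if_pos hxy
    rw [hGx, hGc]
    have h1 : gPlus y y ≤ gPlus c y + gPlus' c y * (y - c) :=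
      tangent y c y hy hc hy
    rw [gPlus_diag y hy.1 hy.2] at h1
    nlinarith [mul_nonneg hsl (sub_nonneg.mpr hxy)]
  · have hGx : GPlus x y = gPlus x y := if_neg (not_le.mpr hxy)
    rw [hGx, hGc]
    exact tangent y c x hy hc hx
end

section
/- Let g be a probability density supported on [δ⁻, δ⁺] ⊂ (−1, 1) with ∫ g(δ)·δ dδ = 0, let ᾱ > 0, η ∈ (0,1], and define D = ∫ g(δ) e^{−η ᾱ (1+δ)} dδ. If ζ = max{(δ⁻)², (δ⁺)²} satisfies 1 − 2(1−D)(1+ζ) ≥ 0, then ᾱ < (1 − √(1 − 2(1−D)(1+ζ))) / (η(1+ζ)). -/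
open MeasureTheory

lemma exp_neg_le_quartic (t : ℝ) (ht : 0 ≤ t) :
    Real.exp (-t) ≤ 1 - t + t^2/2 - t^3/6 + t^4/24 := by
  have h1 : 1 + t + t^2/2 + t^3/6 + t^4/24 ≤ Real.exp t := by
    have := Real.sum_le_exp_of_nonneg ht 5
    simp [Finset.sum_range_succ, Nat.factorial] at this
    linarith
  have h2 : (0:ℝ) < 1 - t + t^2/2 - t^3/6 + t^4/24 := by
    nlinarith [sq_nonneg (t^2 - 2*t), sq_nonneg (t - 3/2)]
  have h3 : Real.exp (-t) * Real.exp t = 1 := by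
    rw [← Real.exp_add]; simp
  nlinarith [Real.exp_pos t, mul_le_mul_of_nonneg_left h1 h2.le,
    pow_nonneg ht 6, pow_nonneg ht 8, Real.exp_pos (-t)]

set_option maxHeartbeats 1000000 in
/-- Upper bound on the conditional mean intensity `ᾱ` from the monitor's no-click probability. -/
theorem stmt7 (g : ℝ → ℝ) (dm dp : ℝ) (hdm : -1 < dm) (hdd : dm ≤ dp) (hdp : dp < 1)
    (hg0 : ∀ x, 0 ≤ g x) (hsupp : ∀ x, x ∉ Set.Icc dm dp → g x = 0)
    (hgint : Integrable g) (hnorm : (∫ x, g x) = 1) (hmean : (∫ x, g x * x) = 0)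
    (α η : ℝ) (hα : 0 < α) (hη : 0 < η) (hη1 : η ≤ 1)
    (D : ℝ) (hD : D = ∫ x, g x * Real.exp (-(η * α * (1 + x))))
    (ζ : ℝ) (hζ : ζ = max (dm^2) (dp^2))
    (hroot : 0 ≤ 1 - 2*(1 - D)*(1 + ζ)) :
    α < (1 - Real.sqrt (1 - 2*(1 - D)*(1 + ζ))) / (η*(1 + ζ)) := by
  have hx0 : 0 < η * α := mul_pos hη hα
  have hζ0 : 0 ≤ ζ := by rw [hζ]; exact le_trans (sq_nonneg dm) (le_max_left _ _)
  have hζ1 : ζ < 1 := by rw [hζ]; apply max_lt <;> nlinarith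
  have hc0 : (0:ℝ) < 1 + ζ := by linarith
  set s := Real.sqrt ζ with hs_def
  have hs2 : s^2 = ζ := Real.sq_sqrt hζ0
  have hs0 : 0 ≤ s := Real.sqrt_nonneg _
  have hs1 : s < 1 := by nlinarith [hs2]
  -- bounds on the support
  have hδb : ∀ δ ∈ Set.Icc dm dp, -s ≤ δ ∧ δ ≤ s := by
    intro δ hδ
    have hm1 : Real.sqrt (dm^2) ≤ s := Real.sqrt_le_sqrt (by rw [hζ]; exact le_max_left _ _)
    have hm2 : Real.sqrt (dp^2) ≤ s := Real.sqrt_le_sqrt (by rw [hζ]; exact le_max_right _ _)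
    rw [Real.sqrt_sq_eq_abs] at hm1 hm2
    constructor
    · have := neg_abs_le dm; linarith [hδ.1]
    · have := le_abs_self dp; linarith [hδ.2]
  -- integrability helper
  have hbd : ∀ φ : ℝ → ℝ, Continuous φ → Integrable (fun z => g z * φ z) := by
    intro φ hφ
    obtain ⟨C, hC⟩ := isCompact_Icc.exists_bound_of_continuousOn
      (s := Set.Icc dm dp) hφ.continuousOn
    refine Integrable.mono' (hgint.const_mul C)
      (hgint.aestronglyMeasurable.mul hφ.aestronglyMeasurable)
      (Filter.Eventually.of_forall fun z => ?_)
    by_cases hz : z ∈ Set.Icc dm dp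
    · rw [Real.norm_eq_abs, abs_mul, abs_of_nonneg (hg0 z), mul_comm C (g z)]
      exact mul_le_mul_of_nonneg_left (hC z hz) (hg0 z)
    · simp [hsupp z hz]
  have hgx : Integrable (fun z => g z * z) := hbd _ continuous_id
  -- integral of g * (affine function)
  have hlin : ∀ A B : ℝ, (∫ z, g z * (A + B * z)) = A := by
    intro A B
    have heq : (fun z => g z * (A + B * z)) = fun z => A * g z + B * (g z * z) := by
      funext z; ring
    rw [heq, integral_add (hgint.const_mul A) (hgx.const_mul B),
      integral_const_mul, integral_const_mul, hnorm, hmean]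
    ring
  -- integrability of the exponential integrand
  have hexp_int : Integrable (fun z => g z * Real.exp (-(η * α * (1 + z)))) :=
    hbd _ (Real.continuous_exp.comp ((continuous_const.mul (continuous_const.add continuous_id)).neg))
  -- main comparison device: if exp(-ηα(1+δ)) ≤ A + B δ on the support, then D ≤ A
  have hDle : ∀ A B : ℝ,
      (∀ δ ∈ Set.Icc dm dp, Real.exp (-(η*α*(1+δ))) ≤ A + B*δ) → D ≤ A := by
    intro A B h
    rw [hD, ← hlin A B]
    apply integral_mono hexp_int (hbd _ (continuous_const.add (continuous_const.mul continuous_id)))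
    intro z
    by_cases hz : z ∈ Set.Icc dm dp
    · exact mul_le_mul_of_nonneg_left (h z hz) (hg0 z)
    · simp [hsupp z hz]
  -- lower bound on D from hroot
  have hroot' : 1 - 1/(2*(1+ζ)) ≤ D := by
    have h2c : (0:ℝ) < 2*(1+ζ) := by linarith
    have : 1 - D ≤ 1/(2*(1+ζ)) := by
      rw [le_div_iff₀ h2c]; nlinarith [hroot]
    linarith
  -- Step B: rule out ηα(1+ζ) ≥ 1
  have hcx : η * α * (1 + ζ) < 1 := by
    by_contra hcon
    push_neg at hcon
    rcases eq_or_lt_of_le hs0 with hs0' | hspos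
    · -- s = 0 forces dm = dp = 0, contradicting ∫ g = 1
      have hz0 : ζ = 0 := by rw [← hs2, ← hs0']; norm_num
      have hdm0 : dm = 0 := by
        have h1 : dm^2 ≤ 0 := by
          rw [hζ] at hz0; rw [← hz0]; exact le_max_left _ _
        have h2 : dm^2 = 0 := le_antisymm h1 (sq_nonneg dm)
        exact pow_eq_zero_iff (by norm_num) |>.mp h2
      have hdp0 : dp = 0 := by
        have h1 : dp^2 ≤ 0 := by
          rw [hζ] at hz0; rw [← hz0]; exact le_max_right _ _
        have h2 : dp^2 = 0 := le_antisymm h1 (sq_nonneg dp)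
        exact pow_eq_zero_iff (by norm_num) |>.mp h2
      have hae : g =ᵐ[volume] 0 := by
        rw [Filter.EventuallyEq, ae_iff]
        refine measure_mono_null (fun z hz => ?_) (measure_singleton (0:ℝ))
        simp only [Set.mem_setOf_eq] at hz
        by_contra hz0'
        refine hz (hsupp z ?_)
        rw [hdm0, hdp0]
        simp only [Set.mem_Icc, not_and_or, not_le]
        rcases lt_trichotomy z 0 with h | h | h
        · exact Or.inl h
        · exact absurd h hz0'
        · exact Or.inr h
      have : (∫ z, g z) = 0 := by rw [integral_congr_ae hae]; simp
      rw [hnorm] at this; norm_num at this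
    · -- s > 0 : chord bound
      set y := 1/(1+ζ) with hy_def
      have hy0 : 0 < y := by positivity
      have hyc : y * (1+ζ) = 1 := by rw [hy_def]; exact one_div_mul_cancel hc0.ne'
      have hy1 : y ≤ 1 := by rw [hy_def]; rw [div_le_one hc0]; linarith
      have hxy : y ≤ η*α := by
        rw [hy_def, div_le_iff₀ hc0]; linarith
      set E₁ := Real.exp (-(η*α*(1-s))) with hE1
      set E₂ := Real.exp (-(η*α*(1+s))) with hE2
      have hF : D ≤ (E₁ + E₂)/2 := by
        apply hDle _ ((E₂ - E₁)/(2*s))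
        intro δ hδ
        obtain ⟨h1, h2⟩ := hδb δ hδ
        have ha : 0 ≤ (s - δ)/(2*s) := div_nonneg (by linarith) (by linarith)
        have hb : 0 ≤ (s + δ)/(2*s) := div_nonneg (by linarith) (by linarith)
        have hab : (s-δ)/(2*s) + (s+δ)/(2*s) = 1 := by
          rw [← add_div, div_eq_one_iff_eq (mul_pos two_pos hspos).ne']
          ring
        have hcv := convexOn_exp.2 (Set.mem_univ (-(η*α*(1-s))))
          (Set.mem_univ (-(η*α*(1+s)))) ha hb hab
        simp only [smul_eq_mul] at hcv
        have harg : (s-δ)/(2*s) * (-(η*α*(1-s))) + (s+δ)/(2*s) * (-(η*α*(1+s)))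
            = -(η*α*(1+δ)) := by
          field_simp; ring
        rw [harg] at hcv
        have heq2 : (s-δ)/(2*s) * E₁ + (s+δ)/(2*s) * E₂
            = (E₁ + E₂)/2 + (E₂ - E₁)/(2*s) * δ := by
          field_simp; ring
        rw [← hE1, ← hE2, heq2] at hcv
        linarith
      have e1 : E₁ ≤ Real.exp (-(y*(1-s))) := by
        rw [hE1]; apply Real.exp_le_exp.2
        have := mul_le_mul_of_nonneg_right hxy (show (0:ℝ) ≤ 1-s by linarith)
        linarith
      have e2 : E₂ ≤ Real.exp (-(y*(1+s))) := by
        rw [hE2]; apply Real.exp_le_exp.2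
        have := mul_le_mul_of_nonneg_right hxy (show (0:ℝ) ≤ 1+s by linarith)
        linarith
      have q1 := exp_neg_le_quartic (y*(1-s)) (mul_nonneg hy0.le (by linarith))
      have q2 := exp_neg_le_quartic (y*(1+s)) (mul_nonneg hy0.le (by linarith))
      have hyc' : y * (1 + s^2) = 1 := by rw [hs2]; exact hyc
      have hs4 : s^4 < 1 := by nlinarith
      have hX : 0 < 4*(1+3*s^2) - y*(1+6*s^2+s^4) := by
        have := mul_le_mul_of_nonneg_right hy1
          (show (0:ℝ) ≤ 1+6*s^2+s^4 by positivity)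
        linarith [hs4, sq_nonneg s]
      have hy3 : 0 < y^3 := pow_pos hy0 3
      have hkey : (1 - y*(1-s) + (y*(1-s))^2/2 - (y*(1-s))^3/6 + (y*(1-s))^4/24)
          + (1 - y*(1+s) + (y*(1+s))^2/2 - (y*(1+s))^3/6 + (y*(1+s))^4/24)
          = 2 - y - (y^3*(1+3*s^2)/3 - y^4*(1+6*s^2+s^4)/12) := by
        linear_combination y * hyc'
      have h12 : 0 < y^3*(1+3*s^2)/3 - y^4*(1+6*s^2+s^4)/12 := by
        linarith [mul_pos hy3 hX]
      have hfin : (Real.exp (-(y*(1-s))) + Real.exp (-(y*(1+s))))/2 < 1 - y/2 := by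
        linarith [q1, q2]
      have hD2 : D < 1 - y/2 := by linarith
      have hhalf : y/2 = 1/(2*(1+ζ)) := by
        rw [hy_def, div_div, mul_comm]
      linarith [hroot']
  -- Step A: strict quadratic upper bound on D
  have hx1 : η*α < 1 := by nlinarith [mul_nonneg hx0.le hζ0]
  have h1dm : 0 < 1 + dm := by linarith
  have h1dp : 0 < 1 + dp := by linarith
  have htm : 0 < η*α*(1+dm) := mul_pos hx0 h1dm
  have htp : η*α*(1+dp) < 2 := by nlinarith
  set K := (η*α*(1+dm))^3 * (4 - η*α*(1+dp))/24 with hK_def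
  have hK : 0 < K := by
    apply div_pos (mul_pos (pow_pos htm 3) (by linarith)) (by norm_num)
  have hDA : D ≤ 1 - η*α + (η*α)^2*(1+ζ)/2 - K := by
    apply hDle _ ((η*α)^2 - η*α)
    intro δ hδ
    obtain ⟨h1, h2⟩ := hδb δ hδ
    have hδm : dm ≤ δ := hδ.1
    have hδp : δ ≤ dp := hδ.2
    have ht0 : 0 ≤ η*α*(1+δ) := by nlinarith
    have hq := exp_neg_le_quartic (η*α*(1+δ)) ht0
    have hδ2 : δ^2 ≤ ζ := by nlinarith [hs2]
    have htle : η*α*(1+δ) ≤ η*α*(1+dp) := by nlinarith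
    have htge : η*α*(1+dm) ≤ η*α*(1+δ) := by nlinarith
    have ht3 : (η*α*(1+dm))^3 * (4 - η*α*(1+dp)) ≤ (η*α*(1+δ))^3 * (4 - η*α*(1+δ)) := by
      have hcube : (η*α*(1+dm))^3 ≤ (η*α*(1+δ))^3 := pow_le_pow_left₀ htm.le htge 3
      have h4t : 4 - η*α*(1+dp) ≤ 4 - η*α*(1+δ) := by linarith
      have h4p : (0:ℝ) ≤ 4 - η*α*(1+dp) := by linarith
      calc (η*α*(1+dm))^3 * (4 - η*α*(1+dp))
          ≤ (η*α*(1+δ))^3 * (4 - η*α*(1+dp)) :=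
            mul_le_mul_of_nonneg_right hcube h4p
        _ ≤ (η*α*(1+δ))^3 * (4 - η*α*(1+δ)) :=
            mul_le_mul_of_nonneg_left h4t (pow_nonneg ht0 3)
    rw [hK_def]
    linarith [hq, ht3, mul_nonneg (sq_nonneg (η*α)) (by linarith : (0:ℝ) ≤ ζ - δ^2)]
  have hDlt : D < 1 - η*α + (η*α)^2*(1+ζ)/2 := by linarith
  have h1cx : 0 < 1 - η*α*(1+ζ) := by linarith
  have hsq : 1 - 2*(1-D)*(1+ζ) < (1 - η*α*(1+ζ))^2 := by
    nlinarith [mul_pos hc0 (show 0 < 1 - D - η*α + (η*α)^2*(1+ζ)/2 by linarith)]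
  have hsqrt := (Real.sqrt_lt' h1cx).2 hsq
  rw [lt_div_iff₀ (mul_pos hη hc0)]
  have hring : α * (η*(1+ζ)) = η*α*(1+ζ) := by ring
  linarith [hsqrt]
end

section
/- Let g be a probability density supported on [δ⁻, δ⁺] ⊂ (−1, 1) with ∫ g(δ)·δ dδ = 0, let ᾱ > 0, and suppose η ∈ (0,1] satisfies 1 − ηᾱ(1 − δ/3) > 0 for all δ ∈ [δ⁻, δ⁺]. Define D = ∫ g(δ) e^{−η ᾱ (1+δ)} dδ. Then D > 1 − ηᾱ + η²ᾱ²/2 − η³ᾱ³/6. -/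
set_option maxHeartbeats 1000000

open MeasureTheory

/-- generic step: f 0 = 0, f' < 0 on negatives ⇒ f > 0 on negatives. -/
lemma taylor_step (f f' : ℝ → ℝ) (hf : ∀ t, HasDerivAt f (f' t) t) (h0 : f 0 = 0)
    (hneg : ∀ t < 0, f' t < 0) : ∀ y < 0, 0 < f y := by
  have hanti : StrictAntiOn f (Set.Iic 0) := by
    apply strictAntiOn_of_deriv_neg (convex_Iic 0)
      (fun t _ => (hf t).continuousAt.continuousWithinAt)
    intro t ht
    rw [interior_Iic] at ht
    rw [(hf t).deriv]
    exact hneg t ht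
  intro y hy
  have := hanti (Set.mem_Iic.mpr hy.le) (Set.mem_Iic.mpr le_rfl) hy
  rw [h0] at this
  exact this

lemma e2 : ∀ y < 0, Real.exp y < 1 + y + y^2/2 := by
  have h := taylor_step (fun t => 1 + t + t^2/2 - Real.exp t) (fun t => 1 + t - Real.exp t)
    (fun t => by
      have h1 := ((hasDerivAt_const t (1:ℝ)).add (hasDerivAt_id t)).add
        ((hasDerivAt_pow 2 t).div_const 2)
      have h2 := h1.sub (Real.hasDerivAt_exp t)
      exact h2.congr_deriv (by push_cast; ring))
    (by norm_num)
    (fun t ht => by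
      have := Real.add_one_lt_exp (ne_of_lt ht)
      linarith)
  intro y hy; have := h y hy; linarith

lemma e3 : ∀ y < 0, 1 + y + y^2/2 + y^3/6 < Real.exp y := by
  have h := taylor_step (fun t => Real.exp t - (1 + t + t^2/2 + t^3/6))
    (fun t => Real.exp t - (1 + t + t^2/2))
    (fun t => by
      have h1 := (((hasDerivAt_const t (1:ℝ)).add (hasDerivAt_id t)).add
        ((hasDerivAt_pow 2 t).div_const 2)).add ((hasDerivAt_pow 3 t).div_const 6)
      have h2 := (Real.hasDerivAt_exp t).sub h1
      exact h2.congr_deriv (by push_cast; ring))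
    (by norm_num)
    (fun t ht => by have := e2 t ht; linarith)
  intro y hy; have := h y hy; linarith

lemma e4 : ∀ y < 0, Real.exp y < 1 + y + y^2/2 + y^3/6 + y^4/24 := by
  have h := taylor_step (fun t => 1 + t + t^2/2 + t^3/6 + t^4/24 - Real.exp t)
    (fun t => 1 + t + t^2/2 + t^3/6 - Real.exp t)
    (fun t => by
      have h1 := ((((hasDerivAt_const t (1:ℝ)).add (hasDerivAt_id t)).add
        ((hasDerivAt_pow 2 t).div_const 2)).add ((hasDerivAt_pow 3 t).div_const 6)).add
        ((hasDerivAt_pow 4 t).div_const 24)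
      have h2 := h1.sub (Real.hasDerivAt_exp t)
      exact h2.congr_deriv (by push_cast; ring))
    (by norm_num)
    (fun t ht => by have := e3 t ht; linarith)
  intro y hy; have := h y hy; linarith

lemma e5 : ∀ y < 0, 1 + y + y^2/2 + y^3/6 + y^4/24 + y^5/120 < Real.exp y := by
  have h := taylor_step (fun t => Real.exp t - (1 + t + t^2/2 + t^3/6 + t^4/24 + t^5/120))
    (fun t => Real.exp t - (1 + t + t^2/2 + t^3/6 + t^4/24))
    (fun t => by
      have h1 := (((((hasDerivAt_const t (1:ℝ)).add (hasDerivAt_id t)).add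
        ((hasDerivAt_pow 2 t).div_const 2)).add ((hasDerivAt_pow 3 t).div_const 6)).add
        ((hasDerivAt_pow 4 t).div_const 24)).add ((hasDerivAt_pow 5 t).div_const 120)
      have h2 := (Real.hasDerivAt_exp t).sub h1
      exact h2.congr_deriv (by push_cast; ring))
    (by norm_num)
    (fun t ht => by have := e4 t ht; linarith)
  intro y hy; have := h y hy; linarith

lemma key (a x : ℝ) (ha : 0 < a) (hx1 : -1 < x) (hx2 : x < 1)
    (hc : 0 < 1 - a * (1 - x/3)) :
    1 - a + a^2/2 - a^3/6 + (-a + a^2 - a^3/2) * x < Real.exp (-(a*(1+x))) := by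
  have hy : -(a*(1+x)) < 0 := by nlinarith
  have hv : a*(3-x) ≤ 3 := by nlinarith
  by_cases hcase : a*(3+x) ≤ 3
  · have h3 := e3 (-(a*(1+x))) hy
    have hR : 0 ≤ (a^2*x^2) * (3 - a*(3+x)) :=
      mul_nonneg (by positivity) (by linarith)
    nlinarith [h3, hR]
  · push_neg at hcase
    have hx0 : 0 < x := by nlinarith
    have h5 := e5 (-(a*(1+x))) hy
    -- hP : 40*x^3 ≤ a*(1+x)^4*(5 - a*(1+x))
    have hr : a*(3+x)*(1+x) ≤ 2*(6+x) := by
      have key2 : a*(3+x)*(1+x)*(3-x) ≤ 3*(3+x)*(1+x) := by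
        nlinarith [mul_nonneg (mul_nonneg (by linarith : (0:ℝ) ≤ 3+x)
          (by linarith : (0:ℝ) ≤ 1+x)) (sub_nonneg.mpr hv)]
      nlinarith [key2, sq_nonneg (1-x), mul_pos hx0 hx0]
    have hA : 6*(1+x)^4*(6+x) ≤ a*(1+x)^4*(5 - a*(1+x))*(3+x)^2 := by
      nlinarith [mul_nonneg (sub_nonneg.mpr hcase.le) (sub_nonneg.mpr hr),
        pow_pos (by linarith : (0:ℝ) < 1+x) 4,
        mul_nonneg (mul_nonneg (pow_pos (by linarith : (0:ℝ) < 1+x) 4).le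
          (sub_nonneg.mpr hcase.le)) (sub_nonneg.mpr hr)]
    have hB : 40*x^3*(3+x)^2 ≤ 6*(1+x)^4*(6+x) := by
      nlinarith [sq_nonneg (1-x), sq_nonneg x, mul_nonneg hx0.le hx0.le,
        mul_nonneg (mul_nonneg hx0.le hx0.le) hx0.le, sq_nonneg (1-x*x),
        mul_nonneg (mul_nonneg hx0.le hx0.le) (sq_nonneg (1-x)),
        mul_nonneg hx0.le (sq_nonneg (1-x))]
    have hP : 40*x^3 ≤ a*(1+x)^4*(5 - a*(1+x)) := by
      have h9 : (0:ℝ) < (3+x)^2 := by positivity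
      have := le_of_mul_le_mul_right (by nlinarith [hA, hB] :
        40*x^3*(3+x)^2 ≤ a*(1+x)^4*(5 - a*(1+x))*(3+x)^2) h9
      linarith
    -- R lower bound: a^2*x^2/6 * (3 - a*(3+x)) ≥ -a^3*x^3/3
    have hR2 : -(a^3*x^3/3) ≤ a^2*x^2/6 * (3 - a*(3+x)) := by
      have h1 : -(2*(a*x)) ≤ 3 - a*(3+x) := by
        have h2 : a*(3+x) - 2*(a*x) = a*(3-x) := by ring
        linarith
      have h3 := mul_le_mul_of_nonneg_left h1 (by positivity : (0:ℝ) ≤ a^2*x^2/6)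
      have h4 : a^2*x^2/6 * -(2*(a*x)) = -(a^3*x^3/3) := by ring
      linarith
    have hP' : a^3*x^3/3 ≤ a^4*(1+x)^4*(5-a*(1+x))/120 := by
      have h3 := mul_le_mul_of_nonneg_left hP (by positivity : (0:ℝ) ≤ a^3/120)
      have h4 : a^3/120 * (40*x^3) = a^3*x^3/3 := by ring
      have h5 : a^3/120 * (a*(1+x)^4*(5 - a*(1+x))) = a^4*(1+x)^4*(5-a*(1+x))/120 := by ring
      linarith
    have hid : 1 - a + a^2/2 - a^3/6 + (-a + a^2 - a^3/2) * x
        = (1 + (-(a*(1+x))) + (-(a*(1+x)))^2/2 + (-(a*(1+x)))^3/6 + (-(a*(1+x)))^4/24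
            + (-(a*(1+x)))^5/120)
          - (a^2*x^2/6 * (3 - a*(3+x)) + a^4*(1+x)^4*(5-a*(1+x))/120) := by ring
    rw [hid]
    linarith [h5, hR2, hP']

/-- Third-order lower bound on the no-click probability `D`. -/
theorem stmt9 (g : ℝ → ℝ) (dm dp : ℝ) (hdm : -1 < dm) (hdd : dm ≤ dp) (hdp : dp < 1)
    (hg0 : ∀ x, 0 ≤ g x) (hsupp : ∀ x, x ∉ Set.Icc dm dp → g x = 0)
    (hgint : Integrable g) (hnorm : (∫ x, g x) = 1) (hmean : (∫ x, g x * x) = 0)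
    (α η : ℝ) (hα : 0 < α) (hη : 0 < η) (hη1 : η ≤ 1)
    (hpos : ∀ δ ∈ Set.Icc dm dp, 0 < 1 - η*α*(1 - δ/3))
    (D : ℝ) (hD : D = ∫ x, g x * Real.exp (-(η * α * (1 + x)))) :
    1 - η*α + η^2*α^2/2 - η^3*α^3/6 < D := by
  have ha : 0 < η * α := mul_pos hη hα
  set a : ℝ := η * α with ha_def
  set T : ℝ := 1 - a + a^2/2 - a^3/6 with hT_def
  set c : ℝ := -a + a^2 - a^3/2 with hc_def
  set F : ℝ → ℝ := fun x => Real.exp (-(a*(1+x))) - (T + c * x) with hF_def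
  -- F is positive on the support interval
  have hFpos : ∀ x ∈ Set.Icc dm dp, 0 < F x := by
    intro x hx
    have h1 : -1 < x := lt_of_lt_of_le hdm hx.1
    have h2 : x < 1 := lt_of_le_of_lt hx.2 hdp
    have := key a x ha h1 h2 (hpos x hx)
    simp only [hF_def, hT_def, hc_def]
    linarith
  -- minimum of F on the compact interval
  have hFc : Continuous F := by
    apply Continuous.sub
    · exact Real.continuous_exp.comp (by continuity)
    · continuity
  obtain ⟨x₀, hx₀, hmin⟩ := isCompact_Icc.exists_isMinOn
    (Set.nonempty_Icc.mpr hdd) hFc.continuousOn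
  have hm : 0 < F x₀ := hFpos x₀ hx₀
  -- integrability facts
  have hgm : AEStronglyMeasurable g volume := hgint.aestronglyMeasurable
  set C : ℝ := max |dm| |dp| with hC_def
  have hgx : Integrable (fun x => g x * x) := by
    refine (hgint.const_mul C).mono (hgm.mul aestronglyMeasurable_id) (ae_of_all _ ?_)
    intro x
    by_cases hx : x ∈ Set.Icc dm dp
    · have hxb : |x| ≤ C := by
        rw [hC_def]
        rcases le_or_gt 0 x with h | h
        · exact le_max_of_le_right (by rw [abs_of_nonneg h]; exact le_trans hx.2 (le_abs_self dp))
        · exact le_max_of_le_left (by rw [abs_of_neg h]; rw [abs_of_neg (lt_of_le_of_lt hx.1 h)] at *; linarith [neg_le_neg hx.1])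
      have hC0 : 0 ≤ C := le_trans (abs_nonneg dm) (le_max_left _ _)
      simp only [norm_mul, Real.norm_eq_abs, abs_of_nonneg (hg0 x), abs_of_nonneg hC0,
        abs_mul, abs_of_nonneg (mul_nonneg hC0 (hg0 x))]
      calc g x * |x| ≤ g x * C := mul_le_mul_of_nonneg_left hxb (hg0 x)
        _ = C * g x := by ring
    · simp [hsupp x hx]
  have hf_int : Integrable (fun x => g x * Real.exp (-(a*(1+x)))) := by
    refine hgint.mono (hgm.mul (Real.continuous_exp.comp (by continuity)).aestronglyMeasurable)
      (ae_of_all _ ?_)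
    intro x
    by_cases hx : x ∈ Set.Icc dm dp
    · have h1 : -(a*(1+x)) ≤ 0 := by
        have : (0:ℝ) ≤ 1 + x := by linarith [lt_of_lt_of_le hdm hx.1]
        have := mul_nonneg ha.le this
        linarith
      have h2 : Real.exp (-(a*(1+x))) ≤ 1 := Real.exp_le_one_iff.mpr h1
      have e1 : ‖g x * Real.exp (-(a*(1+x)))‖ = g x * Real.exp (-(a*(1+x))) := by
        rw [norm_mul, Real.norm_eq_abs, Real.norm_eq_abs, abs_of_nonneg (hg0 x),
          abs_of_nonneg (Real.exp_pos _).le]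
      have e2 : ‖g x‖ = g x := by rw [Real.norm_eq_abs, abs_of_nonneg (hg0 x)]
      rw [e1, e2]
      calc g x * Real.exp (-(a*(1+x))) ≤ g x * 1 := mul_le_mul_of_nonneg_left h2 (hg0 x)
        _ = g x := mul_one _
    · rw [hsupp x hx]; simp
  have hh_int : Integrable (fun x => T * g x + c * (g x * x)) :=
    (hgint.const_mul T).add (hgx.const_mul c)
  -- pointwise comparison
  have hpt : ∀ x, F x₀ * g x ≤ g x * Real.exp (-(a*(1+x))) - (T * g x + c * (g x * x)) := by
    intro x
    by_cases hx : x ∈ Set.Icc dm dp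
    · have h1 : F x₀ ≤ F x := hmin hx
      have h2 : g x * F x₀ ≤ g x * F x := mul_le_mul_of_nonneg_left h1 (hg0 x)
      have h3 : g x * F x = g x * Real.exp (-(a*(1+x))) - (T * g x + c * (g x * x)) := by
        simp only [hF_def]; ring
      linarith [h2, h3.le, h3.ge]
    · simp [hsupp x hx]
  -- integrate
  have hint_mono : (∫ x, F x₀ * g x) ≤
      ∫ x, (g x * Real.exp (-(a*(1+x))) - (T * g x + c * (g x * x))) :=
    integral_mono (hgint.const_mul _) (hf_int.sub hh_int) hpt
  rw [integral_const_mul, hnorm, mul_one] at hint_mono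
  rw [integral_sub hf_int hh_int, integral_add (hgint.const_mul T) (hgx.const_mul c),
    integral_const_mul, integral_const_mul, hnorm, hmean, mul_one, mul_zero, add_zero]
    at hint_mono
  have hDeq : D = ∫ x, g x * Real.exp (-(a*(1+x))) := hD
  have hgoal : 1 - η*α + η^2*α^2/2 - η^3*α^3/6 = T := by
    simp only [hT_def, ha_def]; ring
  rw [hgoal, hDeq]
  linarith [hm, hint_mono]
end
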